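/- Area difference grows linearly: the diameter line through γ_c(θ) and γ_c(θ+π) divides the region bounded by the equidistant γ_c = M + cu into two parts of areas A₁(c,θ) and A₂(c,θ), and A₁(c,θ) - A₂(c,θ) = 4c·β(θ), where β(θ) = ½∫_θ^{θ+π} α[u,u'] ds. Concretely, ∫_θ^{θ+π}[γ_c(s)-M(θ), γ_c'(s)]ds - ∫_{θ+π}^{θ+2π}[γ_c(s)-M(θ), γ_c'(s)]ds = 8c·β(θ). -/

import Mathlib

open Real

/-- Determinant of two plane vectors. -/
noncomputable def det2 (w₁ w₂ : ℝ × ℝ) : ℝ := w₁.1 * w₂.2 - w₁.2 * w₂.1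

/-- The diameter through γ_c(θ) and γ_c(θ+π) divides the region bounded by the
equidistant γ_c = M + cu into two parts whose area difference is 4cβ(θ):
concretely, the difference of the two sector integrals equals 8cβ(θ). -/
theorem area_difference_linear (u u' M : ℝ → ℝ × ℝ) (α : ℝ → ℝ) (c : ℝ)
    (hu : ∀ θ, HasDerivAt u (u' θ) θ)
    (husym : ∀ θ, u (θ + π) = -u θ)
    (hM : ∀ θ, HasDerivAt M (α θ • u' θ) θ)
    (hMper : ∀ θ, M (θ + π) = M θ)
    (hαsym : ∀ θ, α (θ + π) = -α θ)
    (hcontα : Continuous α)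
    (hcontu : Continuous u)
    (hcontu' : Continuous u') :
    ∀ θ : ℝ,
      (∫ s in θ..(θ + π), det2 (M s + c • u s - M θ) ((α s + c) • u' s))
        - (∫ s in (θ + π)..(θ + 2 * π),
            det2 (M s + c • u s - M θ) ((α s + c) • u' s))
      = 8 * c * ((1/2 : ℝ) * ∫ s in θ..(θ + π), α s * det2 (u s) (u' s)) := by
  intro θ
  have hcontM : Continuous M := by
    rw [continuous_iff_continuousAt]; exact fun s => (hM s).continuousAt
  -- antisymmetry of u'
  have hu'sym : ∀ s, u' (s + π) = -u' s := by
    intro s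
    have h1 : HasDerivAt (fun t => u (t + π)) (u' (s + π)) s :=
      (hu (s + π)).comp_add_const s π
    have h2 : HasDerivAt (fun t => u (t + π)) (-u' s) s := by
      have h3 : (fun t => u (t + π)) = fun t => -u t := funext husym
      rw [h3]; exact (hu s).neg
    exact h1.unique h2
  -- component derivatives
  have hM1 : ∀ s, HasDerivAt (fun t => (M t).1) (α s * (u' s).1) s := by
    intro s
    have := (ContinuousLinearMap.fst ℝ ℝ ℝ).hasFDerivAt.comp_hasDerivAt s (hM s)
    exact this
  have hM2 : ∀ s, HasDerivAt (fun t => (M t).2) (α s * (u' s).2) s := by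
    intro s
    have := (ContinuousLinearMap.snd ℝ ℝ ℝ).hasFDerivAt.comp_hasDerivAt s (hM s)
    exact this
  have hu1 : ∀ s, HasDerivAt (fun t => (u t).1) ((u' s).1) s := by
    intro s
    have := (ContinuousLinearMap.fst ℝ ℝ ℝ).hasFDerivAt.comp_hasDerivAt s (hu s)
    exact this
  have hu2 : ∀ s, HasDerivAt (fun t => (u t).2) ((u' s).2) s := by
    intro s
    have := (ContinuousLinearMap.snd ℝ ℝ ℝ).hasFDerivAt.comp_hasDerivAt s (hu s)
    exact this
  -- continuity facts
  have hXcont : Continuous (fun s => det2 (M s - M θ) (u' s)) := by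
    simp only [det2]
    exact ((hcontM.sub continuous_const).fst.mul hcontu'.snd).sub
      ((hcontM.sub continuous_const).snd.mul hcontu'.fst)
  have hYcont : Continuous (fun s => α s * det2 (u s) (u' s)) := by
    refine hcontα.mul ?_
    simp only [det2]
    exact (hcontu.fst.mul hcontu'.snd).sub (hcontu.snd.mul hcontu'.fst)
  have hw1 : Continuous (fun s => M s + c • u s - M θ) :=
    (hcontM.add (hcontu.const_smul c)).sub continuous_const
  have hw2 : Continuous (fun s => (α s + c) • u' s) :=
    (hcontα.add continuous_const).smul hcontu'
  have hfcont : Continuous (fun s => det2 (M s + c • u s - M θ) ((α s + c) • u' s)) := by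
    simp only [det2]
    exact (hw1.fst.mul hw2.snd).sub (hw1.snd.mul hw2.fst)
  have hfshiftcont :
      Continuous (fun s => det2 (M (s + π) + c • u (s + π) - M θ) ((α (s + π) + c) • u' (s + π))) :=
    hfcont.comp (continuous_id.add continuous_const)
  -- key lemma via FTC
  have hg' : ∀ s, HasDerivAt
      (fun t => ((M t).1 - (M θ).1) * (u t).2 - ((M t).2 - (M θ).2) * (u t).1)
      (det2 (M s - M θ) (u' s) - α s * det2 (u s) (u' s)) s := by
    intro s
    have h := (((hM1 s).sub_const (M θ).1).mul (hu2 s)).sub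
      (((hM2 s).sub_const (M θ).2).mul (hu1 s))
    convert h using 1
    · rfl
    · rfl
    · rfl
    simp [det2]
    ring
  have hderint : IntervalIntegrable
      (fun s => det2 (M s - M θ) (u' s) - α s * det2 (u s) (u' s)) MeasureTheory.volume θ (θ + π) :=
    (hXcont.sub hYcont).intervalIntegrable θ (θ + π)
  have hkey0 : (∫ s in θ..(θ + π), (det2 (M s - M θ) (u' s) - α s * det2 (u s) (u' s))) = 0 := by
    rw [intervalIntegral.integral_eq_sub_of_hasDerivAt (fun s _ => hg' s) hderint]
    simp [hMper]
  have hkey : (∫ s in θ..(θ + π), det2 (M s - M θ) (u' s))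
      = ∫ s in θ..(θ + π), α s * det2 (u s) (u' s) := by
    have h := intervalIntegral.integral_sub
      (hXcont.intervalIntegrable θ (θ + π) (μ := MeasureTheory.volume))
      (hYcont.intervalIntegrable θ (θ + π) (μ := MeasureTheory.volume))
    rw [h] at hkey0
    linarith
  -- shift the second integral
  have hshift : (∫ s in (θ + π)..(θ + 2 * π), det2 (M s + c • u s - M θ) ((α s + c) • u' s))
      = ∫ s in θ..(θ + π), det2 (M (s + π) + c • u (s + π) - M θ) ((α (s + π) + c) • u' (s + π)) := by
    have h2 : θ + 2 * π = (θ + π) + π := by ring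
    rw [h2]
    exact (intervalIntegral.integral_comp_add_right
      (fun s => det2 (M s + c • u s - M θ) ((α s + c) • u' s)) π).symm
  rw [hshift, ← intervalIntegral.integral_sub (hfcont.intervalIntegrable θ (θ + π))
      (hfshiftcont.intervalIntegrable θ (θ + π))]
  have hpt : ∀ s, det2 (M s + c • u s - M θ) ((α s + c) • u' s)
      - det2 (M (s + π) + c • u (s + π) - M θ) ((α (s + π) + c) • u' (s + π))
      = 2 * c * det2 (M s - M θ) (u' s) + 2 * c * (α s * det2 (u s) (u' s)) := by
    intro s
    simp only [det2, hMper, husym, hαsym, hu'sym, Prod.fst_add, Prod.snd_add, Prod.fst_sub,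
      Prod.snd_sub, Prod.smul_fst, Prod.smul_snd, smul_eq_mul, Prod.fst_neg, Prod.snd_neg]
    ring
  simp only [hpt]
  rw [intervalIntegral.integral_add (f := fun s => 2 * c * det2 (M s - M θ) (u' s))
      (g := fun s => 2 * c * (α s * det2 (u s) (u' s))) ((continuous_const.mul hXcont).intervalIntegrable θ (θ + π))
      ((continuous_const.mul hYcont).intervalIntegrable θ (θ + π)),
    intervalIntegral.integral_const_mul, intervalIntegral.integral_const_mul, hkey]
  ring
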